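/- In any ℚ(q)-algebra containing elements K (invertible, central among the relevant elements as specified), e_n, f_n (n ≥ 0, e₀ = f₀ = 1) and scalars ν_n ∈ ℚ(q) satisfying, for each n ≥ 1, Σ_{p=0}^{n} ν_p K^{-p} e_{n-p} f_{n-p} = Σ_{p=0}^{n} ν_p K^{p} f_{n-p} e_{n-p} (with ν₀ = 1), one has e_n f_n - f_n e_n = Σ_{p=1}^{n} ( Σ_{r=1}^{p} ν_r θ_{p-r} K^{r-p}(K^r - K^{-r}) ) f_{n-p} e_{n-p}, where θ_m = Σ_{c ∈ C_m} (-1)^{||c||} ν_c, the sum over compositions c = (c₁,…,c_d) of m, with ν_c = ∏ ν_{c_k} and ||c|| = d (and θ₀ = 1). -/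

import Mathlib

open scoped BigOperators

/-- The signed composition sum `θ_m = ∑_{c ∈ C_m} (-1)^{‖c‖} ν_c` (so `θ₀ = 1`). -/
noncomputable def compTheta (ν : ℕ → RatFunc ℚ) (m : ℕ) : RatFunc ℚ :=
  ∑ c : Composition m, (-1 : RatFunc ℚ) ^ c.length * (c.blocks.map ν).prod

/-- Cons construction for compositions. -/
def compCons (m : ℕ) (r : Fin m) (c : Composition (m - 1 - r.val)) : Composition m where
  blocks := (r.val + 1) :: c.blocks
  blocks_pos := by
    intro i hi
    rcases List.mem_cons.1 hi with h | h
    · omega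
    · exact c.blocks_pos h
  blocks_sum := by
    have := c.blocks_sum
    have hr := r.2
    simp [this]
    omega

lemma compCons_bij (m : ℕ) (hm : 1 ≤ m) :
    Function.Bijective (fun x : Σ r : Fin m, Composition (m - 1 - r.val) => compCons m x.1 x.2) := by
  constructor
  · rintro ⟨r, c⟩ ⟨r', c'⟩ h
    have hb : (r.val + 1) :: c.blocks = (r'.val + 1) :: c'.blocks := congrArg Composition.blocks h
    have hr : r.val = r'.val := by simpa using congrArg List.head? hb
    have hrr : r = r' := Fin.ext hr
    subst hrr
    have : c.blocks = c'.blocks := by simpa using congrArg List.tail hb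
    simp [Sigma.mk.inj_iff, Composition.ext_iff, this]
  · intro c
    have hne : c.blocks ≠ [] := by
      intro h
      have := c.blocks_sum
      rw [h] at this
      simp at this
      omega
    obtain ⟨b, t, hbt⟩ := List.exists_cons_of_ne_nil hne
    have hbpos : 0 < b := c.blocks_pos (by rw [hbt]; exact List.mem_cons_self)
    have hsum : b + t.sum = m := by have := c.blocks_sum; rw [hbt] at this; simpa using this
    have hbm : b ≤ m := by omega
    refine ⟨⟨⟨b - 1, by omega⟩, ⟨t, ?_, ?_⟩⟩, ?_⟩
    · intro i hi; exact c.blocks_pos (by rw [hbt]; exact List.mem_cons_of_mem _ hi)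
    · simp; omega
    · apply Composition.ext
      simp [compCons, hbt]
      omega

lemma theta_rec (ν : ℕ → RatFunc ℚ) (m : ℕ) (hm : 1 ≤ m) :
    compTheta ν m = -∑ r ∈ Finset.Icc 1 m, ν r * compTheta ν (m - r) := by
  have h1 : compTheta ν m
      = ∑ x : Σ r : Fin m, Composition (m - 1 - r.val),
          (-1 : RatFunc ℚ) ^ (compCons m x.1 x.2).length
            * ((compCons m x.1 x.2).blocks.map ν).prod :=
    (Fintype.sum_bijective _ (compCons_bij m hm) _ _ (fun x => rfl)).symm
  rw [h1, ← Finset.univ_sigma_univ, Finset.sum_sigma]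
  have h2 : ∀ r : Fin m, ∀ c : Composition (m - 1 - r.val),
      (-1 : RatFunc ℚ) ^ (compCons m r c).length * ((compCons m r c).blocks.map ν).prod
        = -(ν (r.val + 1) * ((-1 : RatFunc ℚ) ^ c.length * (c.blocks.map ν).prod)) := by
    intro r c
    simp [compCons, Composition.length, pow_succ]
    ring
  calc ∑ r : Fin m, ∑ c : Composition (m - 1 - r.val),
        (-1 : RatFunc ℚ) ^ (compCons m r c).length * ((compCons m r c).blocks.map ν).prod
      = ∑ r : Fin m, -(ν (r.val + 1) * compTheta ν (m - 1 - r.val)) := by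
        refine Finset.sum_congr rfl fun r _ => ?_
        rw [Finset.sum_congr rfl fun c _ => h2 r c]
        simp [compTheta, Finset.mul_sum]
    _ = -∑ r ∈ Finset.Icc 1 m, ν r * compTheta ν (m - r) := by
        rw [← Finset.sum_neg_distrib, Fin.sum_univ_eq_sum_range
          (fun r => -(ν (r + 1) * compTheta ν (m - 1 - r)))]
        refine Finset.sum_nbij' (fun r => r + 1) (fun r => r - 1)
          (by intro a ha; simp at ha ⊢; try omega) (by intro a ha; simp at ha ⊢; try omega)
          (by intro a ha; simp at ha ⊢; try omega) (by intro a ha; simp at ha ⊢; try omega) ?_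
        intro a ha
        simp only [Finset.mem_range] at ha
        have : m - 1 - a = m - (a + 1) := by omega
        rw [this]

lemma compTheta_zero (ν : ℕ → RatFunc ℚ) : compTheta ν 0 = 1 := by
  have hb : ∀ c : Composition 0, c.blocks = [] := by
    intro c
    have h := c.blocks_sum
    cases hbl : c.blocks with
    | nil => rfl
    | cons a t =>
      have := c.blocks_pos (by rw [hbl]; exact List.mem_cons_self)
      rw [hbl] at h; simp at h; omega
  haveI : Subsingleton (Composition 0) :=
    ⟨fun a b => Composition.ext (by rw [hb a, hb b])⟩
  rw [compTheta, Fintype.sum_subsingleton _ (Composition.ones 0)]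
  simp [hb (Composition.ones 0), Composition.length]

section sums
variable {M : Type*} [AddCommMonoid M]

lemma range_shift (n : ℕ) (g : ℕ → M) :
    ∑ i ∈ Finset.range n, g (i + 1) = ∑ p ∈ Finset.Icc 1 n, g p := by
  refine Finset.sum_nbij' (fun r => r + 1) (fun r => r - 1)
    (by intro a ha; simp at ha ⊢; try omega) (by intro a ha; simp at ha ⊢; try omega)
    (by intro a ha; simp at ha ⊢; try omega) (by intro a ha; simp at ha ⊢; try omega)
    (fun a _ => rfl)

lemma dswap (n : ℕ) (g : ℕ → ℕ → M) :
    ∑ p ∈ Finset.Icc 1 n, ∑ r ∈ Finset.Icc 1 (n - p), g p r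
      = ∑ r ∈ Finset.Icc 1 n, ∑ p ∈ Finset.Icc 1 (n - r), g p r := by
  rw [Finset.sum_sigma', Finset.sum_sigma']
  refine Finset.sum_nbij' (fun x => ⟨x.2, x.1⟩) (fun x => ⟨x.2, x.1⟩)
    (by rintro ⟨a, b⟩ h; simp [Finset.mem_sigma, Finset.mem_Icc] at h ⊢; omega)
    (by rintro ⟨a, b⟩ h; simp [Finset.mem_sigma, Finset.mem_Icc] at h ⊢; omega)
    (by rintro ⟨a, b⟩ _; rfl) (by rintro ⟨a, b⟩ _; rfl) (by rintro ⟨a, b⟩ _; rfl)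

lemma dsum (n : ℕ) (g : ℕ → ℕ → M) (hg : ∀ p, g p 0 = 0) :
    ∑ p ∈ Finset.Icc 1 n, ∑ q ∈ Finset.Icc 1 (n - p), g p q
      = ∑ s ∈ Finset.Icc 1 n, ∑ p ∈ Finset.Icc 1 s, g p (s - p) := by
  have hshrink : ∀ s ∈ Finset.Icc 1 n,
      ∑ p ∈ Finset.Icc 1 s, g p (s - p) = ∑ p ∈ Finset.Icc 1 (s - 1), g p (s - p) := by
    intro s hs
    refine (Finset.sum_subset (Finset.Icc_subset_Icc_right (by omega)) ?_).symm
    intro p hp hnp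
    simp [Finset.mem_Icc] at hp hnp
    have : p = s := by omega
    subst this
    simp [hg]
  rw [Finset.sum_congr rfl hshrink]
  rw [Finset.sum_sigma', Finset.sum_sigma']
  refine Finset.sum_nbij' (fun x => ⟨x.1 + x.2, x.1⟩) (fun y => ⟨y.2, y.1 - y.2⟩)
    (by rintro ⟨a, b⟩ h; simp [Finset.mem_sigma, Finset.mem_Icc] at h ⊢; omega)
    (by rintro ⟨a, b⟩ h; simp [Finset.mem_sigma, Finset.mem_Icc] at h ⊢; omega)
    (by rintro ⟨a, b⟩ h; simp [Finset.mem_sigma, Finset.mem_Icc] at h ⊢)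
    (by rintro ⟨a, b⟩ h; simp [Finset.mem_sigma, Finset.mem_Icc] at h ⊢; omega) ?_
  rintro ⟨a, b⟩ h
  simp only [Finset.mem_sigma, Finset.mem_Icc] at h
  have : a + b - a = b := by omega
  simp [this]

end sums

noncomputable def Acoef (ν : ℕ → RatFunc ℚ) {R : Type*} [Ring R] [Algebra (RatFunc ℚ) R]
    (K Kinv : R) (p : ℕ) : R :=
  ∑ r ∈ Finset.Icc 1 p,
    (ν r * compTheta ν (p - r)) • (Kinv ^ (p - r) * (K ^ r - Kinv ^ r))

lemma Acoef_zero (ν : ℕ → RatFunc ℚ) {R : Type*} [Ring R] [Algebra (RatFunc ℚ) R]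
    (K Kinv : R) : Acoef ν K Kinv 0 = 0 := by simp [Acoef]

lemma Acoef_rec (ν : ℕ → RatFunc ℚ) {R : Type*} [Ring R] [Algebra (RatFunc ℚ) R]
    (K Kinv : R) (n : ℕ) (hn : 1 ≤ n) :
    Acoef ν K Kinv n = ν n • (K ^ n - Kinv ^ n)
      - ∑ p ∈ Finset.Icc 1 n, ν p • (Kinv ^ p * Acoef ν K Kinv (n - p)) := by
  rw [eq_sub_iff_add_eq]
  have hS : ∑ p ∈ Finset.Icc 1 n, ν p • (Kinv ^ p * Acoef ν K Kinv (n - p))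
      = ∑ r ∈ Finset.Icc 1 n,
          (ν r * ∑ p ∈ Finset.Icc 1 (n - r), ν p * compTheta ν (n - r - p)) •
            (Kinv ^ (n - r) * (K ^ r - Kinv ^ r)) := by
    calc ∑ p ∈ Finset.Icc 1 n, ν p • (Kinv ^ p * Acoef ν K Kinv (n - p))
        = ∑ p ∈ Finset.Icc 1 n, ∑ r ∈ Finset.Icc 1 (n - p),
            (ν p * (ν r * compTheta ν (n - p - r))) •
              (Kinv ^ (n - r) * (K ^ r - Kinv ^ r)) := by
          refine Finset.sum_congr rfl fun p hp => ?_
          simp only [Finset.mem_Icc] at hp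
          rw [Acoef, Finset.mul_sum, Finset.smul_sum]
          refine Finset.sum_congr rfl fun r hr => ?_
          simp only [Finset.mem_Icc] at hr
          rw [mul_smul_comm, smul_smul]
          congr 1
          rw [← mul_assoc, ← pow_add]
          congr 2
          omega
      _ = ∑ r ∈ Finset.Icc 1 n, ∑ p ∈ Finset.Icc 1 (n - r),
            (ν p * (ν r * compTheta ν (n - p - r))) •
              (Kinv ^ (n - r) * (K ^ r - Kinv ^ r)) := dswap n _
      _ = ∑ r ∈ Finset.Icc 1 n,
            (ν r * ∑ p ∈ Finset.Icc 1 (n - r), ν p * compTheta ν (n - r - p)) •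
              (Kinv ^ (n - r) * (K ^ r - Kinv ^ r)) := by
          refine Finset.sum_congr rfl fun r hr => ?_
          rw [Finset.mul_sum, Finset.sum_smul]
          refine Finset.sum_congr rfl fun p hp => ?_
          have h : n - p - r = n - r - p := by omega
          rw [h, mul_left_comm]
  rw [hS, Acoef, ← Finset.sum_add_distrib]
  have hterm : ∀ r ∈ Finset.Icc 1 n,
      (ν r * compTheta ν (n - r)) • (Kinv ^ (n - r) * (K ^ r - Kinv ^ r))
        + (ν r * ∑ p ∈ Finset.Icc 1 (n - r), ν p * compTheta ν (n - r - p)) •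
            (Kinv ^ (n - r) * (K ^ r - Kinv ^ r))
      = (if r = n then ν n • (K ^ n - Kinv ^ n) else 0) := by
    intro r hr
    simp only [Finset.mem_Icc] at hr
    rcases eq_or_ne r n with h | h
    · subst h
      simp [compTheta_zero]
    · have hrn : 1 ≤ n - r := by omega
      rw [if_neg h, ← add_smul]
      have : ν r * compTheta ν (n - r)
          + ν r * ∑ p ∈ Finset.Icc 1 (n - r), ν p * compTheta ν (n - r - p) = 0 := by
        rw [theta_rec ν (n - r) hrn]; ring
      rw [this, zero_smul]
  rw [Finset.sum_congr rfl hterm, Finset.sum_ite_eq' (Finset.Icc 1 n) n]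
  simp [hn]

/-- In a `ℚ(q)`-algebra with an invertible element `K` (commuting with the products
`f_m e_m`), elements `e_n, f_n` (`e₀ = f₀ = 1`) and scalars `ν_n` (`ν₀ = 1`) satisfying
`∑_{p=0}^n ν_p K^{-p} e_{n-p} f_{n-p} = ∑_{p=0}^n ν_p K^p f_{n-p} e_{n-p}` for all `n ≥ 1`,
one has
`e_n f_n - f_n e_n = ∑_{p=1}^n (∑_{r=1}^p ν_r θ_{p-r} K^{r-p}(K^r - K^{-r})) f_{n-p} e_{n-p}`. -/
theorem commutation_equal_case (R : Type*) [Ring R] [Algebra (RatFunc ℚ) R]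
    (K Kinv : R) (e f : ℕ → R) (ν : ℕ → RatFunc ℚ)
    (hK : K * Kinv = 1) (hK' : Kinv * K = 1)
    (he0 : e 0 = 1) (hf0 : f 0 = 1) (hν0 : ν 0 = 1)
    (hcommK : ∀ m, K * (f m * e m) = (f m * e m) * K)
    (hcommKinv : ∀ m, Kinv * (f m * e m) = (f m * e m) * Kinv)
    (hrel : ∀ n : ℕ, 1 ≤ n →
      ∑ p ∈ Finset.range (n + 1), ν p • (Kinv ^ p * (e (n - p) * f (n - p))) =
      ∑ p ∈ Finset.range (n + 1), ν p • (K ^ p * (f (n - p) * e (n - p)))) :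
    ∀ n : ℕ, 1 ≤ n →
      e n * f n - f n * e n =
        ∑ p ∈ Finset.Icc 1 n,
          (∑ r ∈ Finset.Icc 1 p,
              (ν r * compTheta ν (p - r)) • (Kinv ^ (p - r) * (K ^ r - Kinv ^ r))) *
            (f (n - p) * e (n - p)) := by
  intro n
  induction n using Nat.strong_induction_on with
  | _ n ih =>
    intro hn
    show e n * f n - f n * e n
      = ∑ p ∈ Finset.Icc 1 n, Acoef ν K Kinv p * (f (n - p) * e (n - p))
    have hr := hrel n hn
    rw [Finset.sum_range_succ', Finset.sum_range_succ'] at hr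
    simp only [hν0, one_smul, pow_zero, one_mul, Nat.sub_zero] at hr
    rw [range_shift n (fun p => ν p • (Kinv ^ p * (e (n - p) * f (n - p)))),
        range_shift n (fun p => ν p • (K ^ p * (f (n - p) * e (n - p))))] at hr
    have hE : e n * f n - f n * e n
        = (∑ p ∈ Finset.Icc 1 n, ν p • (K ^ p * (f (n - p) * e (n - p))))
          - ∑ p ∈ Finset.Icc 1 n, ν p • (Kinv ^ p * (e (n - p) * f (n - p))) := by
      rw [sub_eq_sub_iff_add_eq_add]
      exact (add_comm _ _).trans hr
    rw [hE]
    have hsub : ∀ p ∈ Finset.Icc 1 n,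
        ν p • (Kinv ^ p * (e (n - p) * f (n - p)))
          = ν p • (Kinv ^ p * (f (n - p) * e (n - p)))
            + ν p • (Kinv ^ p * ∑ q ∈ Finset.Icc 1 (n - p),
                Acoef ν K Kinv q * (f (n - p - q) * e (n - p - q))) := by
      intro p hp
      simp only [Finset.mem_Icc] at hp
      have hsplit : e (n - p) * f (n - p)
          = f (n - p) * e (n - p) + ∑ q ∈ Finset.Icc 1 (n - p),
              Acoef ν K Kinv q * (f (n - p - q) * e (n - p - q)) := by
        rcases Nat.eq_zero_or_pos (n - p) with h0 | h1
        · rw [h0]; simp [he0, hf0]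
        · have h := ih (n - p) (by omega) h1
          rw [sub_eq_iff_eq_add] at h
          rw [h, add_comm]
          rfl
      rw [hsplit, mul_add, smul_add]
    rw [Finset.sum_congr rfl hsub, Finset.sum_add_distrib]
    have hR : ∑ p ∈ Finset.Icc 1 n, Acoef ν K Kinv p * (f (n - p) * e (n - p))
        = (∑ p ∈ Finset.Icc 1 n, ν p • (K ^ p * (f (n - p) * e (n - p))))
          - (∑ p ∈ Finset.Icc 1 n, ν p • (Kinv ^ p * (f (n - p) * e (n - p))))
          - ∑ p ∈ Finset.Icc 1 n, ∑ q ∈ Finset.Icc 1 p,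
              ν q • (Kinv ^ q * (Acoef ν K Kinv (p - q) * (f (n - p) * e (n - p)))) := by
      calc ∑ p ∈ Finset.Icc 1 n, Acoef ν K Kinv p * (f (n - p) * e (n - p))
          = ∑ p ∈ Finset.Icc 1 n,
              (ν p • (K ^ p * (f (n - p) * e (n - p)))
                - ν p • (Kinv ^ p * (f (n - p) * e (n - p)))
                - ∑ q ∈ Finset.Icc 1 p,
                    ν q • (Kinv ^ q * (Acoef ν K Kinv (p - q) * (f (n - p) * e (n - p))))) := by
            refine Finset.sum_congr rfl fun p hp => ?_
            simp only [Finset.mem_Icc] at hp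
            rw [Acoef_rec ν K Kinv p hp.1]
            rw [sub_mul, Finset.sum_mul, smul_mul_assoc, sub_mul, smul_sub]
            congr 1
            refine Finset.sum_congr rfl fun q hq => ?_
            rw [smul_mul_assoc, mul_assoc]
        _ = _ := by rw [Finset.sum_sub_distrib, Finset.sum_sub_distrib]
    rw [hR]
    rw [sub_add_eq_sub_sub]
    congr 1
    symm
    calc ∑ p ∈ Finset.Icc 1 n, ∑ q ∈ Finset.Icc 1 p,
            ν q • (Kinv ^ q * (Acoef ν K Kinv (p - q) * (f (n - p) * e (n - p))))
        = ∑ p ∈ Finset.Icc 1 n, ∑ q ∈ Finset.Icc 1 p,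
            ν q • (Kinv ^ q * (Acoef ν K Kinv (p - q)
              * (f (n - q - (p - q)) * e (n - q - (p - q))))) := by
          refine Finset.sum_congr rfl fun p hp => Finset.sum_congr rfl fun q hq => ?_
          simp only [Finset.mem_Icc] at hp hq
          have : n - q - (p - q) = n - p := by omega
          rw [this]
      _ = ∑ p ∈ Finset.Icc 1 n, ∑ q ∈ Finset.Icc 1 (n - p),
            ν p • (Kinv ^ p * (Acoef ν K Kinv q * (f (n - p - q) * e (n - p - q)))) := by
          refine (dsum n (fun p q =>
            ν p • (Kinv ^ p * (Acoef ν K Kinv q * (f (n - p - q) * e (n - p - q))))) ?_).symm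
          intro p
          simp [Acoef_zero]
      _ = ∑ p ∈ Finset.Icc 1 n,
            ν p • (Kinv ^ p * ∑ q ∈ Finset.Icc 1 (n - p),
              Acoef ν K Kinv q * (f (n - p - q) * e (n - p - q))) := by
          refine Finset.sum_congr rfl fun p hp => ?_
          rw [Finset.mul_sum, Finset.smul_sum]
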